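/- Let α < -1. Then the sequence N^{α+1} · [ (1/N) · Σ_{k=1}^{N-1} (1 - k/N)·(k/N)^α ] converges, as N → ∞, to Σ_{n=1}^{∞} n^α (which is finite since α < -1). -/

import Mathlib

open Filter

/-- For `α < -1`, the sequence
`N^(α+1) · (1/N) ∑_{k=1}^{N-1} (1 - k/N) (k/N)^α` converges to the (finite) series
`∑_{n=1}^∞ n^α`. -/
theorem stmt5 (α : ℝ) (hα : α < -1) :
    Summable (fun n : ℕ => ((n : ℝ) + 1) ^ α) ∧
    Tendsto (fun N : ℕ =>
        (N : ℝ) ^ (α + 1) *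
          ((1 / (N : ℝ)) * ∑ k ∈ Finset.Ico 1 N, (1 - (k : ℝ) / N) * ((k : ℝ) / N) ^ α))
      atTop (nhds (∑' n : ℕ, ((n : ℝ) + 1) ^ α)) := by
  have hsum : Summable (fun n : ℕ => ((n : ℝ) + 1) ^ α) := by
    have := (Real.summable_nat_rpow (p := α)).mpr hα
    have h2 := (summable_nat_add_iff 1).mpr this
    convert h2 using 2 with n
    · rfl
    push_cast
    ring_nf
  refine ⟨hsum, ?_⟩
  set f : ℕ → ℕ → ℝ := fun N k =>
    if k + 1 < N then (1 - ((k : ℝ) + 1) / N) * ((k : ℝ) + 1) ^ α else 0 with hf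
  have key : Tendsto (fun N => ∑' k, f N k) atTop
      (nhds (∑' n : ℕ, ((n : ℝ) + 1) ^ α)) := by
    apply tendsto_tsum_of_dominated_convergence hsum
    · intro k
      have h1 : Tendsto (fun N : ℕ => ((k : ℝ) + 1) / N) atTop (nhds 0) :=
        tendsto_const_div_atTop_nhds_zero_nat _
      have h2 : Tendsto (fun N : ℕ => (1 - ((k : ℝ) + 1) / N) * ((k : ℝ) + 1) ^ α)
          atTop (nhds (((k : ℝ) + 1) ^ α)) := by
        have := (tendsto_const_nhds (x := (1 : ℝ)) (f := atTop)).sub h1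
        simpa using this.mul_const (((k : ℝ) + 1) ^ α)
      refine h2.congr' ?_
      filter_upwards [eventually_gt_atTop (k + 1)] with N hN
      simp [hf, hN]
    · filter_upwards with N k
      have hk1 : (0 : ℝ) ≤ ((k : ℝ) + 1) ^ α := Real.rpow_nonneg (by positivity) _
      simp only [hf]
      split_ifs with h
      · rw [Real.norm_eq_abs, abs_mul, abs_of_nonneg hk1]
        have hN : (0 : ℝ) < N := by
          have : 0 < N := by omega
          exact_mod_cast this
        have hle : ((k : ℝ) + 1) / N ≤ 1 := by
          rw [div_le_one hN]
          exact_mod_cast h.le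
        have h0 : (0 : ℝ) ≤ 1 - ((k : ℝ) + 1) / N := by linarith
        rw [abs_of_nonneg h0]
        have hd : (0 : ℝ) ≤ ((k : ℝ) + 1) / N := div_nonneg (by positivity) hN.le
        nlinarith [mul_nonneg hd hk1]
      · simpa using hk1
  refine key.congr' ?_
  filter_upwards [eventually_gt_atTop 0] with N hN
  have hNR : (0 : ℝ) < N := by exact_mod_cast hN
  have hsupp : ∀ k ∉ Finset.range (N - 1), f N k = 0 := by
    intro k hk
    simp only [Finset.mem_range] at hk
    have : ¬ k + 1 < N := by omega
    simp [hf, this]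
  rw [tsum_eq_sum hsupp]
  rw [Finset.mul_sum, Finset.mul_sum]
  rw [Finset.sum_Ico_eq_sum_range]
  simp only [Nat.cast_add, Nat.cast_one, hf]
  apply Finset.sum_congr rfl
  intro k hk
  simp only [Finset.mem_range] at hk
  have hcond : k + 1 < N := by omega
  have hkpos : (0 : ℝ) < (k : ℝ) + 1 := by positivity
  rw [if_pos hcond]
  have hdiv : (((k : ℝ) + 1) / N) ^ α = ((k : ℝ) + 1) ^ α / (N : ℝ) ^ α :=
    Real.div_rpow (by positivity : (0:ℝ) ≤ (k:ℝ)+1) hNR.le α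
  have hadd : (N : ℝ) ^ (α + 1) = (N : ℝ) ^ α * (N : ℝ) := by
    rw [Real.rpow_add hNR, Real.rpow_one]
  have hNα : (N : ℝ) ^ α ≠ 0 := (Real.rpow_pos_of_pos hNR α).ne'
  have : ((1 : ℝ) + k) = (k : ℝ) + 1 := by ring
  rw [this, hdiv, hadd]
  field_simp
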